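/- Let m, n ≥ 1, let A be a real m × 3n matrix with columns indexed by Fin n × Fin 3, and set B = A · C_n. Let PF be the set of all admissible vectors N : Fin n × Fin 3 → ℝ with B·N = 0 and Σ N(j,k)² = 1/2, and let D be the set of all vectors ξ : Fin n × Fin 3 → ℝ such that each triple (ξ(j,0), ξ(j,1), ξ(j,2)) is of degeneration form, A·ξ = 0, and Σ ξ(j,k)² = 1. Then the map N ↦ C_nᵀ · N is a bijection from PF onto D. -/

import Mathlib

open Matrix

/-- The matrix `C₁`, with rows `(0,1,−1)`, `(−1,0,1)`, `(1,−1,0)`. -/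
def Cone : Matrix (Fin 3) (Fin 3) ℝ := !![0, 1, -1; -1, 0, 1; 1, -1, 0]

/-- The `3n × 3n` block diagonal matrix `C_n` with `n` copies of `C₁` on its
diagonal, rows and columns indexed by `Fin n × Fin 3`. -/
def Cblock (n : ℕ) : Matrix (Fin n × Fin 3) (Fin n × Fin 3) ℝ :=
  fun p q => if p.1 = q.1 then Cone p.2 q.2 else 0

/-- A vector is admissible if all its coordinates are `≥ 0` and in each block at
most one coordinate is nonzero. -/
def Admissible {n : ℕ} (N : Fin n × Fin 3 → ℝ) : Prop :=
  (∀ p, 0 ≤ N p) ∧ ∀ (j : Fin n) (k k' : Fin 3), N (j, k) ≠ 0 → N (j, k') ≠ 0 → k = k'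

/-- A triple in `ℝ³` is of degeneration form if it equals `(0,x,−x)`, `(−x,0,x)`
or `(x,−x,0)` for some `x ≥ 0`. -/
def DegenerationForm (ξ : Fin 3 → ℝ) : Prop :=
  ∃ x : ℝ, 0 ≤ x ∧ (ξ = ![0, x, -x] ∨ ξ = ![-x, 0, x] ∨ ξ = ![x, -x, 0])

/-- The map `N ↦ C_nᵀ · N` is a bijection from the projective admissible solution
space `PF` (admissible vectors in the kernel of `B = A·C_n` of square-norm `1/2`)
onto the tropical pre-variety `D` (vectors of blockwise degeneration form in the
kernel of `A` of square-norm `1`). -/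
lemma CT_apply (n : ℕ) (N : Fin n × Fin 3 → ℝ) (j : Fin n) (k : Fin 3) :
    ((Cblock n)ᵀ.mulVec N) (j, k) =
      Cone 0 k * N (j, 0) + Cone 1 k * N (j, 1) + Cone 2 k * N (j, 2) := by
  simp [Matrix.mulVec, dotProduct, Cblock, Fintype.sum_prod_type,
    ite_mul, Finset.sum_ite_eq, Fin.sum_univ_three]

lemma CT_neg (n : ℕ) : (Cblock n)ᵀ = -(Cblock n) := by
  ext ⟨j, k⟩ ⟨j', k'⟩
  simp only [Matrix.transpose_apply, Cblock, Matrix.neg_apply]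
  by_cases h : j = j'
  · subst h; simp; fin_cases k <;> fin_cases k' <;> norm_num [Cone]
  · simp [h, Ne.symm h]

theorem bijection_PF_to_prevariety (m n : ℕ) (hm : 1 ≤ m) (hn : 1 ≤ n)
    (A : Matrix (Fin m) (Fin n × Fin 3) ℝ) :
    Set.BijOn (Cblock n)ᵀ.mulVec
      {N : Fin n × Fin 3 → ℝ | Admissible N ∧ (A * Cblock n).mulVec N = 0 ∧
        ∑ p, (N p) ^ 2 = 1 / 2}
      {ξ : Fin n × Fin 3 → ℝ |
        (∀ j : Fin n, DegenerationForm fun k => ξ (j, k)) ∧ A.mulVec ξ = 0 ∧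
        ∑ p, (ξ p) ^ 2 = 1} := by
  classical
  refine ⟨?_, ?_, ?_⟩
  · -- MapsTo
    rintro N ⟨⟨hnn, hadm⟩, hB, hsum⟩
    have hz : ∀ (j : Fin n) (k k' : Fin 3), k ≠ k' → N (j, k) * N (j, k') = 0 := by
      intro j k k' hkk'
      by_contra h
      exact hkk' (hadm j k k' (left_ne_zero_of_mul h) (right_ne_zero_of_mul h))
    refine ⟨?_, ?_, ?_⟩
    · intro j
      have h2 : (N (j,1) = 0 ∧ N (j,2) = 0) ∨ (N (j,0) = 0 ∧ N (j,2) = 0) ∨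
          (N (j,0) = 0 ∧ N (j,1) = 0) := by
        by_cases h0 : N (j,0) = 0
        · by_cases h1 : N (j,1) = 0
          · exact Or.inr (Or.inr ⟨h0, h1⟩)
          · by_cases h2 : N (j,2) = 0
            · exact Or.inr (Or.inl ⟨h0, h2⟩)
            · exact absurd (hadm j 1 2 h1 h2) (by decide)
        · by_cases h1 : N (j,1) = 0
          · by_cases h2 : N (j,2) = 0
            · exact Or.inl ⟨h1, h2⟩
            · exact absurd (hadm j 0 2 h0 h2) (by decide)
          · exact absurd (hadm j 0 1 h0 h1) (by decide)
      rcases h2 with ⟨hb, hc⟩ | ⟨ha, hc⟩ | ⟨ha, hb⟩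
      · exact ⟨N (j,0), hnn (j,0), Or.inl (by
          funext k; rw [CT_apply]; fin_cases k <;> norm_num [Cone, hb, hc])⟩
      · exact ⟨N (j,1), hnn (j,1), Or.inr (Or.inl (by
          funext k; rw [CT_apply]; fin_cases k <;> norm_num [Cone, ha, hc]))⟩
      · exact ⟨N (j,2), hnn (j,2), Or.inr (Or.inr (by
          funext k; rw [CT_apply]; fin_cases k <;> norm_num [Cone, Matrix.cons_val_two, ha, hb]))⟩
    · rw [Matrix.mulVec_mulVec, CT_neg, Matrix.mul_neg, Matrix.neg_mulVec, hB, neg_zero]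
    · rw [Fintype.sum_prod_type] at hsum ⊢
      calc ∑ j, ∑ k, ((Cblock n)ᵀ.mulVec N) (j, k) ^ 2
          = ∑ j, 2 * ∑ k, N (j, k) ^ 2 := by
            refine Finset.sum_congr rfl fun j _ => ?_
            rw [Fin.sum_univ_three, Fin.sum_univ_three, CT_apply, CT_apply, CT_apply]
            have h01 := hz j 0 1 (by decide)
            have h02 := hz j 0 2 (by decide)
            have h12 := hz j 1 2 (by decide)
            norm_num [Cone, Matrix.cons_val_two]
            linear_combination (-2 : ℝ) * h01 - 2 * h02 - 2 * h12
        _ = 2 * ∑ j, ∑ k, N (j, k) ^ 2 := (Finset.mul_sum _ _ _).symm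
        _ = 1 := by rw [hsum]; norm_num
  · -- InjOn
    rintro N ⟨⟨hnn, hadm⟩, -, -⟩ N' ⟨⟨hnn', hadm'⟩, -, -⟩ heq
    funext p
    obtain ⟨j, k⟩ := p
    have e1 := congrFun heq (j, 1)
    have e2 := congrFun heq (j, 2)
    rw [CT_apply, CT_apply] at e1 e2
    norm_num [Cone, Matrix.cons_val_two] at e1 e2
    have hd01 : N (j,0) - N' (j,0) = N (j,1) - N' (j,1) := by linarith
    have hd02 : N (j,0) - N' (j,0) = N (j,2) - N' (j,2) := by linarith
    rcases lt_trichotomy (N (j,0) - N' (j,0)) 0 with h | h | h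
    · have h0 : N' (j,0) ≠ 0 := by have := hnn (j,0); intro h'; rw [h'] at h; linarith
      have h1 : N' (j,1) ≠ 0 := by have := hnn (j,1); intro h'; rw [h'] at hd01; linarith
      exact absurd (hadm' j 0 1 h0 h1) (by decide)
    · fin_cases k
      · show N (j, 0) = N' (j, 0); linarith
      · show N (j, 1) = N' (j, 1); linarith
      · show N (j, 2) = N' (j, 2); linarith
    · have h0 : N (j,0) ≠ 0 := by have := hnn' (j,0); intro h'; rw [h'] at h; linarith
      have h1 : N (j,1) ≠ 0 := by have := hnn' (j,1); intro h'; rw [h'] at hd01; linarith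
      exact absurd (hadm j 0 1 h0 h1) (by decide)
  · -- SurjOn
    rintro ξ ⟨hdeg, hA, hsum⟩
    set N : Fin n × Fin 3 → ℝ := fun p => max (ξ (p.1, p.2 + 1)) 0 with hNdef
    have hN : ∀ j : Fin n, ∃ x : ℝ, 0 ≤ x ∧
        ((N (j,0) = x ∧ N (j,1) = 0 ∧ N (j,2) = 0 ∧
            ξ (j,0) = 0 ∧ ξ (j,1) = x ∧ ξ (j,2) = -x) ∨
         (N (j,0) = 0 ∧ N (j,1) = x ∧ N (j,2) = 0 ∧
            ξ (j,0) = -x ∧ ξ (j,1) = 0 ∧ ξ (j,2) = x) ∨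
         (N (j,0) = 0 ∧ N (j,1) = 0 ∧ N (j,2) = x ∧
            ξ (j,0) = x ∧ ξ (j,1) = -x ∧ ξ (j,2) = 0)) := by
      intro j
      obtain ⟨x, hx, h | h | h⟩ := hdeg j
      · have h0 := congrFun h 0; have h1 := congrFun h 1; have h2 := congrFun h 2
        refine ⟨x, hx, Or.inl ⟨?_, ?_, ?_, by simpa using h0, by simpa using h1,
          by simpa using h2⟩⟩ <;>
          simp [hNdef, show ((0:Fin 3)+1) = 1 from rfl, show ((1:Fin 3)+1) = 2 from rfl,
            show ((2:Fin 3)+1) = 0 from rfl] <;>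
          simp_all <;> linarith
      · have h0 := congrFun h 0; have h1 := congrFun h 1; have h2 := congrFun h 2
        refine ⟨x, hx, Or.inr (Or.inl ⟨?_, ?_, ?_, by simpa using h0, by simpa using h1,
          by simpa using h2⟩)⟩ <;>
          simp [hNdef, show ((0:Fin 3)+1) = 1 from rfl, show ((1:Fin 3)+1) = 2 from rfl,
            show ((2:Fin 3)+1) = 0 from rfl] <;>
          simp_all <;> linarith
      · have h0 := congrFun h 0; have h1 := congrFun h 1; have h2 := congrFun h 2
        refine ⟨x, hx, Or.inr (Or.inr ⟨?_, ?_, ?_, by simpa using h0, by simpa using h1,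
          by simpa using h2⟩)⟩ <;>
          simp [hNdef, show ((0:Fin 3)+1) = 1 from rfl, show ((1:Fin 3)+1) = 2 from rfl,
            show ((2:Fin 3)+1) = 0 from rfl] <;>
          simp_all <;> linarith
    have hTN : (Cblock n)ᵀ.mulVec N = ξ := by
      funext p
      obtain ⟨j, k⟩ := p
      obtain ⟨x, hx, h | h | h⟩ := hN j <;>
        obtain ⟨ha, hb, hc, h0, h1, h2⟩ := h <;>
        rw [CT_apply] <;> fin_cases k <;>
        [(show _ = ξ (j, 0)); (show _ = ξ (j, 1)); (show _ = ξ (j, 2));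
         (show _ = ξ (j, 0)); (show _ = ξ (j, 1)); (show _ = ξ (j, 2));
         (show _ = ξ (j, 0)); (show _ = ξ (j, 1)); (show _ = ξ (j, 2))] <;>
        norm_num [Cone, Matrix.cons_val_two, ha, hb, hc, h0, h1, h2]
    refine ⟨N, ⟨⟨⟨fun p => le_max_right _ _, ?_⟩, ?_, ?_⟩, hTN⟩⟩
    · intro j k k' hk hk'
      obtain ⟨x, hx, h | h | h⟩ := hN j <;> obtain ⟨ha, hb, hc, -, -, -⟩ := h <;>
        fin_cases k <;> fin_cases k' <;> simp_all only [ne_eq, not_true_eq_false, eq_self_iff_true, Fin.isValue, Fin.reduceFinMk,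
          Fin.reduceAdd]
    · have hC : (Cblock n).mulVec N = -ξ := by
        have : Cblock n = -((Cblock n)ᵀ) := by rw [CT_neg, neg_neg]
        rw [this, Matrix.neg_mulVec, hTN]
      rw [← Matrix.mulVec_mulVec, hC, Matrix.mulVec_neg, hA, neg_zero]
    · rw [Fintype.sum_prod_type] at hsum ⊢
      calc ∑ j, ∑ k, N (j, k) ^ 2 = ∑ j, (1/2) * ∑ k, (ξ (j, k)) ^ 2 := by
            refine Finset.sum_congr rfl fun j _ => ?_
            obtain ⟨x, hx, h | h | h⟩ := hN j <;>
              obtain ⟨ha, hb, hc, h0, h1, h2⟩ := h <;>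
              rw [Fin.sum_univ_three, Fin.sum_univ_three, ha, hb, hc, h0, h1, h2] <;> ring
        _ = (1/2) * ∑ j, ∑ k, (ξ (j, k)) ^ 2 := (Finset.mul_sum _ _ _).symm
        _ = 1/2 := by rw [hsum]; norm_num
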